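/- Up to independent positive rescalings in each degree, there is a unique Hermitian inner product on Λ_q(u_+) invariant under the *-algebra U_q(l)-action (i.e. satisfying (v, Xv') = (X*v, v') with E* = KF, F* = EK^{-1}, K* = K). In the ordered bases {1}, {v_1, v_0, v_{-1}}, {v_1∧v_0, v_1∧v_{-1}, v_0∧v_{-1}}, {v_1∧v_0∧v_{-1}}, the Gram matrices are M⁽⁰⁾ = (1), M⁽¹⁾ = diag(1, 1, q²), M⁽²⁾ = diag(1, q⁴, q²), M⁽³⁾ = (1). -/

import Mathlib

open Matrix

noncomputable section

/-- [2]^{1/2} = √(q+q⁻¹). -/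
def rt2 (q : ℝ) : ℝ := Real.sqrt (q + q⁻¹)

/-- K in degree 1 (basis v₁, v₀, v₋₁) and in degree 2
(basis v₁∧v₀, v₁∧v₋₁, v₀∧v₋₁): weights q², 1, q⁻². -/
def Kdeg (q : ℝ) : Matrix (Fin 3) (Fin 3) ℝ := diagonal ![q ^ 2, 1, q⁻¹ ^ 2]

/-- K⁻¹ in degrees 1 and 2. -/
def Kideg (q : ℝ) : Matrix (Fin 3) (Fin 3) ℝ := diagonal ![q⁻¹ ^ 2, 1, q ^ 2]

/-- E in degree 1: E v₀ = [2]^{1/2} v₁, E v₋₁ = [2]^{1/2} v₀. -/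
def Edeg1 (q : ℝ) : Matrix (Fin 3) (Fin 3) ℝ :=
  rt2 q • (single 0 1 1 + single 1 2 1)

/-- F in degree 1: F v₁ = [2]^{1/2} v₀, F v₀ = [2]^{1/2} v₋₁. -/
def Fdeg1 (q : ℝ) : Matrix (Fin 3) (Fin 3) ℝ :=
  rt2 q • (single 1 0 1 + single 2 1 1)

/-- E in degree 2: E(v₁∧v₋₁) = [2]^{1/2} q² v₁∧v₀, E(v₀∧v₋₁) = [2]^{1/2} q⁻² v₁∧v₋₁. -/
def Edeg2 (q : ℝ) : Matrix (Fin 3) (Fin 3) ℝ :=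
  single 0 1 (rt2 q * q ^ 2) + single 1 2 (rt2 q * q⁻¹ ^ 2)

/-- F in degree 2: F(v₁∧v₀) = [2]^{1/2} q⁻² v₁∧v₋₁, F(v₁∧v₋₁) = [2]^{1/2} q² v₀∧v₋₁. -/
def Fdeg2 (q : ℝ) : Matrix (Fin 3) (Fin 3) ℝ :=
  single 1 0 (rt2 q * q⁻¹ ^ 2) + single 2 1 (rt2 q * q ^ 2)

lemma posdef_diag_pos {n : Type*} [Fintype n] [DecidableEq n] {M : Matrix n n ℝ}
    (h : M.PosDef) (i : n) : 0 < M i i := by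
  exact h.diag_pos

lemma cancel_aux {a b x : ℝ} (h : x * a = b * x) (hab : a ≠ b) : x = 0 := by
  have h2 : x * (a - b) = 0 := by linear_combination h
  rcases mul_eq_zero.mp h2 with h' | h'
  · exact h'
  · exact absurd (by linarith) hab

/-- Up to a positive rescaling in each degree, the invariant Hermitian inner product
on Λ_q(u₊) (invariance: (v, Xv') = (X*v, v') with K* = K, E* = KF, F* = EK⁻¹)
is unique, with Gram matrices (1), diag(1,1,q²), diag(1,q⁴,q²), (1). -/
theorem stmt_14 (q : ℝ) (hq0 : 0 < q) (hq1 : q < 1)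
    (M0 M3 : Matrix (Fin 1) (Fin 1) ℝ) (M1 M2 : Matrix (Fin 3) (Fin 3) ℝ)
    (hM0 : M0.PosDef) (hM1 : M1.PosDef) (hM2 : M2.PosDef) (hM3 : M3.PosDef)
    (h1K : M1 * Kdeg q = (Kdeg q)ᵀ * M1)
    (h1E : M1 * Edeg1 q = (Kdeg q * Fdeg1 q)ᵀ * M1)
    (h1F : M1 * Fdeg1 q = (Edeg1 q * Kideg q)ᵀ * M1)
    (h2K : M2 * Kdeg q = (Kdeg q)ᵀ * M2)
    (h2E : M2 * Edeg2 q = (Kdeg q * Fdeg2 q)ᵀ * M2)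
    (h2F : M2 * Fdeg2 q = (Edeg2 q * Kideg q)ᵀ * M2) :
    ∃ c0 c1 c2 c3 : ℝ, 0 < c0 ∧ 0 < c1 ∧ 0 < c2 ∧ 0 < c3 ∧
      M0 = c0 • (1 : Matrix (Fin 1) (Fin 1) ℝ) ∧
      M1 = c1 • diagonal ![1, 1, q ^ 2] ∧
      M2 = c2 • diagonal ![1, q ^ 4, q ^ 2] ∧
      M3 = c3 • (1 : Matrix (Fin 1) (Fin 1) ℝ) := by
  have hq : q ≠ 0 := hq0.ne'
  have hrt : 0 < rt2 q := Real.sqrt_pos.mpr (by positivity)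
  have hq2 : q ^ 2 < 1 := by nlinarith
  have hinv : 1 < q⁻¹ := by
    rw [lt_inv_comm₀ one_pos hq0]; simpa using hq1
  have hqi : 1 < q⁻¹ ^ 2 := by nlinarith
  have hlt : q ^ 2 < q⁻¹ ^ 2 := by nlinarith
  have e1K : ∀ i j, M1 i j * (![q ^ 2, 1, q⁻¹ ^ 2] j) = (![q ^ 2, 1, q⁻¹ ^ 2] i) * M1 i j := by
    intro i j
    have := congrFun (congrFun h1K i) j
    simpa [Kdeg, Matrix.mul_diagonal, Matrix.diagonal_transpose, Matrix.diagonal_mul] using this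
  have e2K : ∀ i j, M2 i j * (![q ^ 2, 1, q⁻¹ ^ 2] j) = (![q ^ 2, 1, q⁻¹ ^ 2] i) * M2 i j := by
    intro i j
    have := congrFun (congrFun h2K i) j
    simpa [Kdeg, Matrix.mul_diagonal, Matrix.diagonal_transpose, Matrix.diagonal_mul] using this
  have o01 : M1 0 1 = 0 := cancel_aux (by simpa using e1K 0 1) hq2.ne'
  have o02 : M1 0 2 = 0 := cancel_aux (by simpa using e1K 0 2) (hlt.ne')
  have o10 : M1 1 0 = 0 := cancel_aux (by simpa using e1K 1 0) hq2.ne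
  have o12 : M1 1 2 = 0 := cancel_aux (by simpa using e1K 1 2) hqi.ne'
  have o20 : M1 2 0 = 0 := cancel_aux (by simpa using e1K 2 0) hlt.ne
  have o21 : M1 2 1 = 0 := cancel_aux (by simpa using e1K 2 1) hqi.ne
  have p01 : M2 0 1 = 0 := cancel_aux (by simpa using e2K 0 1) hq2.ne'
  have p02 : M2 0 2 = 0 := cancel_aux (by simpa using e2K 0 2) (hlt.ne')
  have p10 : M2 1 0 = 0 := cancel_aux (by simpa using e2K 1 0) hq2.ne
  have p12 : M2 1 2 = 0 := cancel_aux (by simpa using e2K 1 2) hqi.ne'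
  have p20 : M2 2 0 = 0 := cancel_aux (by simpa using e2K 2 0) hlt.ne
  have p21 : M2 2 1 = 0 := cancel_aux (by simpa using e2K 2 1) hqi.ne
  have e1a := congrFun (congrFun h1E 0) 1
  have e1b := congrFun (congrFun h1E 1) 2
  have e2a := congrFun (congrFun h2E 0) 1
  have e2b := congrFun (congrFun h2E 1) 2
  simp only [Edeg1, Fdeg1, Edeg2, Fdeg2, Kdeg, Matrix.mul_apply, Fin.sum_univ_three,
    Matrix.transpose_apply, Matrix.smul_apply, Matrix.add_apply, Matrix.single,
    Matrix.of_apply, Matrix.diagonal_apply, smul_eq_mul] at e1a e1b e2a e2b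
  norm_num [o01, o02, o10, o12, o20, o21, p01, p02, p10, p12, p20, p21] at e1a e1b e2a e2b
  norm_num [Fin.ext_iff] at e1a e1b e2a e2b
  field_simp at e1a e1b e2a e2b
  have hv2 : (![q ^ 2, 1, 1 / q ^ 2] 2 : ℝ) = 1 / q ^ 2 := by simp
  rw [hv2] at e1b e2b
  have d11 : M1 1 1 = M1 0 0 :=
    e1a.symm
  have d12 : M1 2 2 = q ^ 2 * M1 0 0 := by
    rw [← d11, e1b, ← mul_assoc, mul_one_div_cancel (pow_ne_zero 2 hq), one_mul]
  have d21 : M2 1 1 = q ^ 4 * M2 0 0 :=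
    e2a.symm
  have d22 : M2 2 2 = q ^ 2 * M2 0 0 := by
    have h4 : M2 0 0 = 1 / q ^ 2 * M2 2 2 :=
      mul_left_cancel₀ (pow_ne_zero 4 hq) (by linear_combination e2b - d21)
    rw [h4, ← mul_assoc, mul_one_div_cancel (pow_ne_zero 2 hq), one_mul]
  refine ⟨M0 0 0, M1 0 0, M2 0 0, M3 0 0, posdef_diag_pos hM0 0, posdef_diag_pos hM1 0,
    posdef_diag_pos hM2 0, posdef_diag_pos hM3 0, ?_, ?_, ?_, ?_⟩
  · ext i j
    fin_cases i <;> fin_cases j <;> simp [Matrix.one_apply]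
  · ext i j
    fin_cases i <;> fin_cases j <;>
      simp [Matrix.diagonal_apply, o01, o02, o10, o12, o20, o21, d11, d12, mul_comm]
  · ext i j
    fin_cases i <;> fin_cases j <;>
      simp [Matrix.diagonal_apply, p01, p02, p10, p12, p20, p21, d21, d22, mul_comm]
  · ext i j
    fin_cases i <;> fin_cases j <;> simp [Matrix.one_apply]
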